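/- arXiv:1511.09011 — 4 statements merged into one kernel-verified Lean document; each statement's English description precedes it below -/
import Mathlib

section
/- Let k ≥ 1, let u be a nonempty finite word and v an ω-word over the same alphabet A with alph(u) = alph(v) (the same set of letters occurring). Then for every ℓ ≥ 2^k, we have u^∞ ≲_{2,k} u^ℓ v. -/
namespace QAH

/-- Quantifier-free first-order formulas over letter predicates and `<`,
with variables as de Bruijn-style indices into a valuation. -/
inductive QF (A : Type) : Type
  | tru : QF A
  | letter : A → ℕ → QF A
  | lt : ℕ → ℕ → QF A
  | not : QF A → QF A
  | or : QF A → QF A → QF A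

/-- Prenex first-order formulas: a quantifier prefix over a quantifier-free matrix. -/
inductive Prenex (A : Type) : Type
  | qf : QF A → Prenex A
  | ex : Prenex A → Prenex A
  | all : Prenex A → Prenex A

variable {A : Type}

/-- Quantifier rank (for a prenex formula: the number of quantifiers). -/
def Prenex.rank : Prenex A → ℕ
  | .qf _ => 0
  | .ex φ => φ.rank + 1
  | .all φ => φ.rank + 1

def QF.ClosedUnder (n : ℕ) : QF A → Prop
  | .tru => True
  | .letter _ x => x < n
  | .lt x y => x < n ∧ y < n
  | .not φ => φ.ClosedUnder n
  | .or φ ψ => φ.ClosedUnder n ∧ ψ.ClosedUnder n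

def Prenex.ClosedUnder : ℕ → Prenex A → Prop
  | n, .qf φ => φ.ClosedUnder n
  | n, .ex φ => φ.ClosedUnder (n+1)
  | n, .all φ => φ.ClosedUnder (n+1)

/-- A sentence: no free variables. -/
def Prenex.Closed (φ : Prenex A) : Prop := φ.ClosedUnder 0

/-- `(φ.levels).1` is the least `i` such that `φ` is a `Σᵢ` formula (at most `i`
alternating quantifier blocks, starting with `∃`, or fewer blocks), and
`(φ.levels).2` the least `i` such that `φ` is a `Πᵢ` formula. -/
def Prenex.levels : Prenex A → ℕ × ℕ
  | .qf _ => (0, 0)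
  | .ex φ => (max (φ.levels).1 1, max (φ.levels).1 1 + 1)
  | .all φ => (max (φ.levels).2 1 + 1, max (φ.levels).2 1)

/-- `φ` is a `Σᵢ` formula. -/
def Prenex.IsSigma (i : ℕ) (φ : Prenex A) : Prop := (φ.levels).1 ≤ i

def consVal {D : Type} (d : D) (val : ℕ → D) : ℕ → D
  | 0 => d
  | n+1 => val n

def QF.Sat {D : Type} [LT D] (w : D → A) (val : ℕ → D) : QF A → Prop
  | .tru => True
  | .letter a x => w (val x) = a
  | .lt x y => val x < val y
  | .not φ => ¬ QF.Sat w val φ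
  | .or φ ψ => QF.Sat w val φ ∨ QF.Sat w val ψ

def Prenex.Sat {D : Type} [LT D] (w : D → A) : (ℕ → D) → Prenex A → Prop
  | val, .qf φ => φ.Sat w val
  | val, .ex φ => ∃ d : D, Prenex.Sat w (consVal d val) φ
  | val, .all φ => ∀ d : D, Prenex.Sat w (consVal d val) φ

/-- Satisfaction of a sentence by a finite word (positions `Fin u.length`). -/
def SatFin (u : List A) (φ : Prenex A) : Prop :=
  ∀ val : ℕ → Fin u.length, φ.Sat u.get val

/-- Satisfaction of a sentence by an ω-word (positions `ℕ`). -/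
def SatInf (w : ℕ → A) (φ : Prenex A) : Prop :=
  ∀ val : ℕ → ℕ, φ.Sat w val

/-- `u ≲_{i,k} v` on finite words: every `Σᵢ` sentence of quantifier rank at most `k`
satisfied by `u` is satisfied by `v`. -/
def leFin (i k : ℕ) (u v : List A) : Prop :=
  ∀ φ : Prenex A, φ.Closed → φ.IsSigma i → φ.rank ≤ k → SatFin u φ → SatFin v φ

/-- `u ≲_{i,k} v` on ω-words. -/
def leInf (i k : ℕ) (u v : ℕ → A) : Prop :=
  ∀ φ : Prenex A, φ.Closed → φ.IsSigma i → φ.rank ≤ k → SatInf u φ → SatInf v φ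

/-- `u ≡_{i,k} v` : mutual `≲_{i,k}`. -/
def equivFin (i k : ℕ) (u v : List A) : Prop := leFin i k u v ∧ leFin i k v u

def equivInf (i k : ℕ) (u v : ℕ → A) : Prop := leInf i k u v ∧ leInf i k v u

/-- Concatenation of a finite word to the left of an ω-word. -/
def catInf (u : List A) (v : ℕ → A) : ℕ → A :=
  fun n => if h : n < u.length then u.get ⟨n, h⟩ else v (n - u.length)

/-- The ω-word `u^∞ = uuu⋯`. -/
def wpow (u : List A) (hu : u ≠ []) : ℕ → A :=
  fun n => u.get ⟨n % u.length, Nat.mod_lt n (List.length_pos_iff.mpr hu)⟩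

/-- The finite word `u^ℓ`. -/
def fpow (u : List A) (ℓ : ℕ) : List A := (List.replicate ℓ u).flatten

/-- The alphabet (set of letters) of a finite word. -/
def alphFin (u : List A) : Set A := {a | a ∈ u}

/-- The alphabet of an ω-word. -/
def alphInf (w : ℕ → A) : Set A := {a | ∃ n, w n = a}


section Aux
variable {A : Type}

/-! ### Valuation tools -/

def pushVals {D : Type} (l : List D) (val : ℕ → D) : ℕ → D := l.foldr consVal val

@[simp] lemma pushVals_nil {D : Type} (val : ℕ → D) : pushVals [] val = val := rfl

@[simp] lemma pushVals_cons {D : Type} (a : D) (l : List D) (val : ℕ → D) :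
    pushVals (a :: l) val = consVal a (pushVals l val) := rfl

lemma pushVals_lt {D : Type} (l : List D) (val : ℕ → D) (i : ℕ) (h : i < l.length) :
    pushVals l val i = l.get ⟨i, h⟩ := by
  induction l generalizing i with
  | nil => simp at h
  | cons a l ih =>
    cases i with
    | zero => rfl
    | succ j => simpa [pushVals, consVal] using ih j (by simpa using h)

lemma pushVals_ge {D : Type} (l : List D) (val : ℕ → D) (i : ℕ) (h : l.length ≤ i) :
    pushVals l val i = val (i - l.length) := by
  induction l generalizing i with
  | nil => simp
  | cons a l ih =>
    cases i with
    | zero => simp at h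
    | succ j =>
      have := ih j (by simpa using h)
      simpa [pushVals, consVal, Nat.succ_sub_one] using this

lemma pushVals_map (F : ℕ → ℕ) (l : List ℕ) (val : ℕ → ℕ) :
    pushVals (l.map F) (fun i => F (val i)) = fun i => F (pushVals l val i) := by
  induction l with
  | nil => rfl
  | cons a l ih =>
    funext i
    cases i with
    | zero => rfl
    | succ j =>
      simpa [pushVals, consVal] using congrFun ih j

end Aux
section Aux2
variable {A : Type}

/-! ### Quantifier-free transfer lemmas -/

lemma QF.sat_congr {D : Type} [LT D] (w : D → A) (val val' : ℕ → D) (n : ℕ)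
    (h : ∀ i < n, val i = val' i) :
    ∀ φ : QF A, φ.ClosedUnder n → (φ.Sat w val ↔ φ.Sat w val') := by
  intro φ hφ
  induction φ with
  | tru => simp [QF.Sat]
  | letter a x => simp only [QF.Sat]; rw [h x hφ]
  | lt x y => simp only [QF.Sat]; rw [h x hφ.1, h y hφ.2]
  | not ψ ih => simp only [QF.Sat]; rw [ih hφ]
  | or ψ χ ih1 ih2 => simp only [QF.Sat]; rw [ih1 hφ.1, ih2 hφ.2]

lemma QF.sat_map (w w' : ℕ → A) (R : ℕ → ℕ) (hmono : StrictMono R)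
    (hlet : ∀ p, w (R p) = w' p) (val : ℕ → ℕ) :
    ∀ φ : QF A, (φ.Sat w (fun i => R (val i)) ↔ φ.Sat w' val) := by
  intro φ
  induction φ with
  | tru => simp [QF.Sat]
  | letter a x => simp only [QF.Sat]; rw [hlet]
  | lt x y => simp only [QF.Sat]; exact hmono.lt_iff_lt
  | not ψ ih => simp only [QF.Sat]; rw [ih]
  | or ψ χ ih1 ih2 => simp only [QF.Sat]; rw [ih1, ih2]

/-! ### Quantifier blocks -/

def exIter : ℕ → Prenex A → Prenex A
  | 0, φ => φ
  | m+1, φ => .ex (exIter m φ)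

def allIter : ℕ → Prenex A → Prenex A
  | 0, φ => φ
  | n+1, φ => .all (allIter n φ)

lemma exIter_succ' (m : ℕ) (φ : Prenex A) : exIter (m+1) φ = exIter m (.ex φ) := by
  induction m with
  | zero => rfl
  | succ m ih => show Prenex.ex _ = Prenex.ex _; rw [ih]

lemma allIter_succ' (n : ℕ) (φ : Prenex A) : allIter (n+1) φ = allIter n (.all φ) := by
  induction n with
  | zero => rfl
  | succ n ih => show Prenex.all _ = Prenex.all _; rw [ih]

lemma closed_exIter (m : ℕ) (φ : Prenex A) (j : ℕ)
    (h : (exIter m φ).ClosedUnder j) : φ.ClosedUnder (j + m) := by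
  induction m generalizing j with
  | zero => exact h
  | succ m ih =>
    have := ih (j+1) h
    have e : j + 1 + m = j + (m + 1) := by omega
    rwa [e] at this

lemma closed_allIter (n : ℕ) (φ : Prenex A) (j : ℕ)
    (h : (allIter n φ).ClosedUnder j) : φ.ClosedUnder (j + n) := by
  induction n generalizing j with
  | zero => exact h
  | succ n ih =>
    have := ih (j+1) h
    have e : j + 1 + n = j + (n + 1) := by omega
    rwa [e] at this

lemma sat_exIter {D : Type} [LT D] (w : D → A) (m : ℕ) (φ : Prenex A) (val : ℕ → D) :
    Prenex.Sat w val (exIter m φ) ↔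
      ∃ l : List D, l.length = m ∧ Prenex.Sat w (pushVals l val) φ := by
  induction m generalizing φ val with
  | zero =>
    constructor
    · intro h; exact ⟨[], rfl, h⟩
    · rintro ⟨l, hl, h⟩
      rw [List.length_eq_zero_iff] at hl
      subst hl; exact h
  | succ m ih =>
    rw [exIter_succ', ih]
    constructor
    · rintro ⟨l, hl, d, hd⟩
      exact ⟨d :: l, by simp [hl], hd⟩
    · rintro ⟨l, hl, h⟩
      cases l with
      | nil => simp at hl
      | cons d l => exact ⟨l, by simpa using hl, d, h⟩

lemma sat_allIter {D : Type} [LT D] (w : D → A) (n : ℕ) (φ : Prenex A) (val : ℕ → D) :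
    Prenex.Sat w val (allIter n φ) ↔
      ∀ l : List D, l.length = n → Prenex.Sat w (pushVals l val) φ := by
  induction n generalizing φ val with
  | zero =>
    constructor
    · intro h l hl
      rw [List.length_eq_zero_iff] at hl
      subst hl; exact h
    · intro h; exact h [] rfl
  | succ n ih =>
    rw [allIter_succ', ih]
    constructor
    · intro h l hl
      cases l with
      | nil => simp at hl
      | cons d l => exact h l (by simpa using hl) d
    · intro h l hl d
      exact h (d :: l) (by simp [hl])

/-! ### Normal form for Σ₂ formulas -/

lemma pi1_normal (φ : Prenex A) (h : (φ.levels).2 ≤ 1) :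
    ∃ n ψ, φ = allIter n (.qf ψ) ∧ φ.rank = n := by
  induction φ with
  | qf ψ => exact ⟨0, ψ, rfl, rfl⟩
  | ex φ ih => simp [Prenex.levels] at h
  | all φ ih =>
    simp only [Prenex.levels] at h
    obtain ⟨n, ψ, rfl, hr⟩ := ih (by omega)
    exact ⟨n+1, ψ, rfl, by simp [Prenex.rank, hr]⟩

lemma sigma2_normal (φ : Prenex A) (h : φ.IsSigma 2) :
    ∃ m n ψ, φ = exIter m (allIter n (.qf ψ)) ∧ φ.rank = m + n := by
  induction φ with
  | qf ψ => exact ⟨0, 0, ψ, rfl, rfl⟩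
  | ex φ ih =>
    simp only [Prenex.IsSigma, Prenex.levels] at h
    obtain ⟨m, n, ψ, rfl, hr⟩ := ih (by simp [Prenex.IsSigma]; omega)
    exact ⟨m+1, n, ψ, rfl, by simp only [Prenex.rank, hr]; omega⟩
  | all φ ih =>
    simp only [Prenex.IsSigma, Prenex.levels] at h
    obtain ⟨n, ψ, rfl, hr⟩ := pi1_normal φ (by omega)
    refine ⟨0, n+1, ψ, rfl, by simp only [Prenex.rank, hr]; omega⟩

end Aux2
section Aux3
variable {A : Type}

/-! ### Word evaluation lemmas -/

lemma length_fpow (u : List A) (ℓ : ℕ) : (fpow u ℓ).length = ℓ * u.length := by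
  induction ℓ with
  | zero => simp [fpow]
  | succ ℓ ih =>
    have : fpow u (ℓ+1) = u ++ fpow u ℓ := by simp [fpow, List.replicate_succ]
    rw [this]
    simp [ih]
    ring

lemma fpow_getElem (u : List A) (hu : u ≠ []) (ℓ p : ℕ) (h : p < ℓ * u.length) :
    (fpow u ℓ)[p]'(by rw [length_fpow]; exact h) =
      u[p % u.length]'(Nat.mod_lt p (List.length_pos_iff.mpr hu)) := by
  have hL : 0 < u.length := List.length_pos_iff.mpr hu
  induction ℓ generalizing p with
  | zero => omega
  | succ ℓ ih =>
    have he : fpow u (ℓ+1) = u ++ fpow u ℓ := by simp [fpow, List.replicate_succ]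
    rcases Nat.lt_or_ge p u.length with hp | hp
    · have : (fpow u (ℓ+1))[p]'(by rw [length_fpow]; exact h) = u[p]'hp := by
        simp only [he]
        exact List.getElem_append_left hp
      rw [this]
      congr 1
      exact (Nat.mod_eq_of_lt hp).symm
    · have hlt : p - u.length < ℓ * u.length := by
        have := h; rw [Nat.succ_mul] at this; omega
      have : (fpow u (ℓ+1))[p]'(by rw [length_fpow]; exact h) =
          (fpow u ℓ)[p - u.length]'(by rw [length_fpow]; exact hlt) := by
        simp only [he]
        rw [List.getElem_append_right (by omega)]
      rw [this, ih _ hlt]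
      congr 1
      conv_rhs => rw [show p = p - u.length + u.length by omega]
      rw [Nat.add_mod_right]

lemma wpow_eval (u : List A) (hu : u ≠ []) (p : ℕ) :
    wpow u hu p = u[p % u.length]'(Nat.mod_lt p (List.length_pos_iff.mpr hu)) := rfl

lemma catInf_eval_lt (u : List A) (hu : u ≠ []) (v : ℕ → A) (ℓ p : ℕ) (h : p < ℓ * u.length) :
    catInf (fpow u ℓ) v p = u[p % u.length]'(Nat.mod_lt p (List.length_pos_iff.mpr hu)) := by
  have hlen : p < (fpow u ℓ).length := by rw [length_fpow]; exact h
  rw [catInf, dif_pos hlen]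
  rw [List.get_eq_getElem]
  exact fpow_getElem u hu ℓ p h

lemma catInf_eval_ge (u : List A) (v : ℕ → A) (ℓ p : ℕ) (h : ℓ * u.length ≤ p) :
    catInf (fpow u ℓ) v p = v (p - ℓ * u.length) := by
  have hlen : ¬ p < (fpow u ℓ).length := by rw [length_fpow]; omega
  rw [catInf, dif_neg hlen, length_fpow]

end Aux3
section Aux4
variable {A : Type}

/-! ### The copy-index compression -/

def Cset (L : ℕ) (d : List ℕ) : Finset ℕ := insert 0 (d.map (· / L)).toFinset

lemma zero_mem_Cset (L : ℕ) (d : List ℕ) : 0 ∈ Cset L d := Finset.mem_insert_self 0 _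

lemma div_mem_Cset (L : ℕ) (d : List ℕ) (p : ℕ) (hp : p ∈ d) : p / L ∈ Cset L d := by
  apply Finset.mem_insert_of_mem
  rw [List.mem_toFinset]
  exact List.mem_map.mpr ⟨p, hp, rfl⟩

lemma card_Cset_le (L : ℕ) (d : List ℕ) : (Cset L d).card ≤ d.length + 1 := by
  calc (Cset L d).card ≤ (d.map (· / L)).toFinset.card + 1 := Finset.card_insert_le _ _
    _ ≤ (d.map (· / L)).length + 1 := by
        exact Nat.add_le_add_right (List.toFinset_card_le _) 1
    _ = d.length + 1 := by rw [List.length_map]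

def theta (L : ℕ) (d : List ℕ) (q : ℕ) : ℕ := ((Cset L d).filter (· < q)).card

lemma theta_zero (L : ℕ) (d : List ℕ) : theta L d 0 = 0 := by
  simp [theta]

lemma theta_mono (L : ℕ) (d : List ℕ) {q q' : ℕ} (h : q ≤ q') : theta L d q ≤ theta L d q' := by
  apply Finset.card_le_card
  intro x hx
  simp only [Finset.mem_filter] at hx ⊢
  exact ⟨hx.1, lt_of_lt_of_le hx.2 h⟩

lemma theta_strict (L : ℕ) (d : List ℕ) {c q' : ℕ} (hc : c ∈ Cset L d) (h : c < q') :
    theta L d c < theta L d q' := by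
  have hsub : insert c ((Cset L d).filter (· < c)) ⊆ (Cset L d).filter (· < q') := by
    intro x hx
    rcases Finset.mem_insert.mp hx with rfl | hx
    · exact Finset.mem_filter.mpr ⟨hc, h⟩
    · have := Finset.mem_filter.mp hx
      exact Finset.mem_filter.mpr ⟨this.1, lt_trans this.2 h⟩
  have hcard := Finset.card_le_card hsub
  rw [Finset.card_insert_of_notMem (by simp)] at hcard
  exact hcard

lemma theta_gap (L : ℕ) (d : List ℕ) {q q' : ℕ} (h : q ≤ q') :
    theta L d q' ≤ theta L d q + (q' - q) := by
  have hsub : (Cset L d).filter (· < q') ⊆ (Cset L d).filter (· < q) ∪ Finset.Ico q q' := by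
    intro x hx
    have := Finset.mem_filter.mp hx
    rcases Nat.lt_or_ge x q with hx' | hx'
    · exact Finset.mem_union_left _ (Finset.mem_filter.mpr ⟨this.1, hx'⟩)
    · exact Finset.mem_union_right _ (Finset.mem_Ico.mpr ⟨hx', this.2⟩)
  calc theta L d q' ≤ _ := Finset.card_le_card hsub
    _ ≤ theta L d q + (Finset.Ico q q').card := Finset.card_union_le _ _
    _ = theta L d q + (q' - q) := by rw [Nat.card_Ico]

lemma theta_lt_card (L : ℕ) (d : List ℕ) {c : ℕ} (hc : c ∈ Cset L d) :
    theta L d c < (Cset L d).card := by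
  have hsub : (Cset L d).filter (· < c) ⊆ (Cset L d).erase c := by
    intro x hx
    have := Finset.mem_filter.mp hx
    exact Finset.mem_erase.mpr ⟨Nat.ne_of_lt this.2, this.1⟩
  calc theta L d c ≤ ((Cset L d).erase c).card := Finset.card_le_card hsub
    _ < (Cset L d).card := Finset.card_erase_lt_of_mem hc

lemma anch_set_nonempty (L : ℕ) (d : List ℕ) (P : ℕ) :
    ((Cset L d).filter (fun c => theta L d c ≤ P)).Nonempty :=
  ⟨0, Finset.mem_filter.mpr ⟨zero_mem_Cset L d, by rw [theta_zero]; exact Nat.zero_le _⟩⟩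

def anch (L : ℕ) (d : List ℕ) (P : ℕ) : ℕ :=
  ((Cset L d).filter (fun c => theta L d c ≤ P)).max' (anch_set_nonempty L d P)

lemma anch_mem (L : ℕ) (d : List ℕ) (P : ℕ) :
    anch L d P ∈ Cset L d ∧ theta L d (anch L d P) ≤ P := by
  have := Finset.max'_mem _ (anch_set_nonempty L d P)
  exact Finset.mem_filter.mp this

lemma le_anch (L : ℕ) (d : List ℕ) {P c : ℕ} (hc : c ∈ Cset L d) (h : theta L d c ≤ P) :
    c ≤ anch L d P := by
  unfold anch
  apply Finset.le_max'
  exact Finset.mem_filter.mpr ⟨hc, h⟩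

def sigmaMap (L : ℕ) (d : List ℕ) (P : ℕ) : ℕ :=
  anch L d P + (P - theta L d (anch L d P))

lemma sigmaMap_theta (L : ℕ) (d : List ℕ) {c : ℕ} (hc : c ∈ Cset L d) :
    sigmaMap L d (theta L d c) = c := by
  have ha := anch_mem L d (theta L d c)
  have h1 : c ≤ anch L d (theta L d c) := le_anch L d hc le_rfl
  have h2 : anch L d (theta L d c) ≤ c := by
    by_contra hlt
    push_neg at hlt
    exact absurd ha.2 (Nat.not_le.mpr (theta_strict L d hc hlt))
  have : anch L d (theta L d c) = c := le_antisymm h2 h1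
  rw [sigmaMap, this]
  omega

lemma sigmaMap_strictMono (L : ℕ) (d : List ℕ) : StrictMono (sigmaMap L d) := by
  apply strictMono_nat_of_lt_succ
  intro P
  have ha := anch_mem L d P
  have ha' := anch_mem L d (P+1)
  set a := anch L d P with hadef
  set a' := anch L d (P+1) with ha'def
  have hle : a ≤ a' := le_anch L d ha.1 (le_trans ha.2 (Nat.le_succ P))
  rcases eq_or_lt_of_le hle with heq | hlt
  · rw [sigmaMap, sigmaMap, ← hadef, ← ha'def, ← heq]
    have := ha.2
    omega
  · have hth : ¬ theta L d a' ≤ P := by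
      intro hcon
      exact absurd (le_anch L d ha'.1 hcon) (Nat.not_le.mpr hlt)
    have hth1 : theta L d a' = P + 1 := le_antisymm ha'.2 (by omega)
    have hgap : theta L d a' ≤ theta L d a + (a' - a) := theta_gap L d hle
    rw [sigmaMap, sigmaMap, ← hadef, ← ha'def]
    have := ha.2
    omega

lemma sigmaMap_mono (L : ℕ) (d : List ℕ) : Monotone (sigmaMap L d) :=
  (sigmaMap_strictMono L d).monotone

end Aux4
section Aux5
variable {A : Type}

lemma getElem_idx_congr (u : List A) {i j : ℕ} (hi : i < u.length) (h : i = j) :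
    u[i]'hi = u[j]'(h ▸ hi) := by subst h; rfl

theorem core (u : List A) (hu : u ≠ []) (v : ℕ → A) (halph : alphFin u = alphInf v)
    (ℓ k : ℕ) (hℓ : 2 ^ k ≤ ℓ) (d : List ℕ) (hd : d.length ≤ k) :
    ∃ (e : List ℕ) (R : ℕ → ℕ), e.length = d.length ∧ StrictMono R ∧
      (∀ p, wpow u hu (R p) = catInf (fpow u ℓ) v p) ∧ e.map R = d := by
  classical
  set L := u.length with hLdef
  have hL : 0 < L := List.length_pos_iff.mpr hu
  have hrho : ∀ j : ℕ, ∃ r : Fin u.length, u.get r = v j := by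
    intro j
    have hmem : v j ∈ alphFin u := by rw [halph]; exact ⟨j, rfl⟩
    exact List.mem_iff_get.mp hmem
  choose rho hrhoSpec using hrho
  have hcard : (Cset L d).card ≤ ℓ := by
    have h1 : (Cset L d).card ≤ d.length + 1 := card_Cset_le L d
    have h2 : k + 1 ≤ 2 ^ k := Nat.succ_le_of_lt (Nat.lt_two_pow_self (n := k))
    omega
  have hθlt : ∀ c ∈ Cset L d, theta L d c < ℓ := fun c hc =>
    lt_of_lt_of_le (theta_lt_card L d hc) hcard
  have hσs : StrictMono (sigmaMap L d) := sigmaMap_strictMono L d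
  have hdm : ∀ q r : ℕ, r < L → (q * L + r) / L = q ∧ (q * L + r) % L = r := by
    intro q r hr
    constructor
    · rw [mul_comm, Nat.mul_add_div hL, Nat.div_eq_of_lt hr]
      exact Nat.add_zero q
    · rw [mul_comm, Nat.mul_add_mod, Nat.mod_eq_of_lt hr]
  have key : ∀ a b r r' : ℕ, a < b → r < L → a * L + r < b * L + r' := by
    intro a b r r' hab hr
    have h1 : (a + 1) * L = a * L + L := Nat.succ_mul a L
    have h2 : (a + 1) * L ≤ b * L := Nat.mul_le_mul_right L (Nat.succ_le_of_lt hab)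
    omega
  refine ⟨d.map (fun p => theta L d (p / L) * L + p % L),
      fun p => if p < ℓ * L then sigmaMap L d (p / L) * L + p % L
        else (sigmaMap L d ℓ + (p - ℓ * L)) * L + (rho (p - ℓ * L) : ℕ),
      by simp, ?_, ?_, ?_⟩
  · -- strict monotonicity
    apply strictMono_nat_of_lt_succ
    intro p
    have hq := Nat.div_add_mod' p L  -- p / L * L + p % L = p
    have hrlt : p % L < L := Nat.mod_lt p hL
    by_cases hp : p < ℓ * L
    · by_cases hp1 : p + 1 < ℓ * L
      · simp only [if_pos hp, if_pos hp1]
        by_cases hr1 : p % L + 1 < L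
        · have he : p + 1 = p / L * L + (p % L + 1) := by omega
          rw [he, (hdm _ _ hr1).1, (hdm _ _ hr1).2]
          omega
        · have hL1 : p % L + 1 = L := by omega
          have he : p + 1 = (p / L + 1) * L + 0 := by
            have h1 : (p / L + 1) * L = p / L * L + L := Nat.succ_mul _ _
            omega
          rw [he, (hdm _ _ hL).1, (hdm _ _ hL).2]
          exact key _ _ _ _ (hσs (Nat.lt_succ_self _)) hrlt
      · simp only [if_pos hp, if_neg hp1]
        have hdiv : p / L < ℓ := (Nat.div_lt_iff_lt_mul hL).mpr hp
        have hab : sigmaMap L d (p / L) < sigmaMap L d ℓ + (p + 1 - ℓ * L) :=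
          lt_of_lt_of_le (hσs hdiv) (Nat.le_add_right _ _)
        exact key _ _ _ _ hab hrlt
    · have hp1 : ¬ p + 1 < ℓ * L := by omega
      simp only [if_neg hp, if_neg hp1]
      have hab : sigmaMap L d ℓ + (p - ℓ * L) < sigmaMap L d ℓ + (p + 1 - ℓ * L) := by omega
      exact key _ _ _ _ hab (rho (p - ℓ * L)).isLt
  · -- letter preservation
    intro p
    by_cases hp : p < ℓ * L
    · simp only [if_pos hp]
      rw [wpow_eval u hu, catInf_eval_lt u hu v ℓ p hp]
      exact getElem_idx_congr u _ ((hdm (sigmaMap L d (p / L)) (p % L) (Nat.mod_lt p hL)).2)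
    · simp only [if_neg hp]
      rw [wpow_eval u hu, catInf_eval_ge u v ℓ p (by rw [← hLdef]; omega)]
      calc u[((sigmaMap L d ℓ + (p - ℓ * L)) * L + (rho (p - ℓ * L) : ℕ)) % u.length]'_
          = u[(rho (p - ℓ * L) : ℕ)]'(rho (p - ℓ * L)).isLt :=
            getElem_idx_congr u _ ((hdm _ _ (rho (p - ℓ * L)).isLt).2)
        _ = u.get (rho (p - ℓ * L)) := by rw [List.get_eq_getElem]
        _ = v (p - ℓ * L) := hrhoSpec _
  · -- e.map R = d
    rw [List.map_map]
    conv_rhs => rw [← List.map_id d]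
    apply List.map_congr_left
    intro p hp
    have hqC : p / L ∈ Cset L d := div_mem_Cset L d p hp
    have hθ : theta L d (p / L) < ℓ := hθlt _ hqC
    have hrlt : p % L < L := Nat.mod_lt p hL
    have hEp : theta L d (p / L) * L + p % L < ℓ * L := by
      have := key (theta L d (p / L)) ℓ (p % L) 0 hθ hrlt
      omega
    show (if _ then _ else _) = id p
    rw [if_pos hEp, (hdm _ _ hrlt).1, (hdm _ _ hrlt).2, sigmaMap_theta L d hqC]
    rw [Nat.div_add_mod' p L]
    rfl

end Aux5
/-- Let `k ≥ 1`, `u` a nonempty finite word and `v` an ω-word with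
`alph u = alph v`. Then for every `ℓ ≥ 2^k`, `u^∞ ≲_{2,k} u^ℓ v`. -/
theorem upow_le_upow_cat (A : Type) (k : ℕ) (hk : 1 ≤ k)
    (u : List A) (hu : u ≠ []) (v : ℕ → A) (halph : alphFin u = alphInf v)
    (ℓ : ℕ) (hℓ : 2 ^ k ≤ ℓ) :
    leInf 2 k (wpow u hu) (catInf (fpow u ℓ) v) := by
  intro φ hclosed hsigma hrank hsat
  obtain ⟨m, n, ψ, rfl, hrankEq⟩ := sigma2_normal φ hsigma
  rw [hrankEq] at hrank
  obtain ⟨d, hdlen, hall⟩ :=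
    (sat_exIter (wpow u hu) m _ (fun _ => 0)).mp (hsat (fun _ => 0))
  have hallg : ∀ g : List ℕ, g.length = n →
      QF.Sat (wpow u hu) (pushVals g (pushVals d (fun _ => 0))) ψ := by
    intro g hg
    exact (sat_allIter (wpow u hu) n _ (pushVals d (fun _ => 0))).mp hall g hg
  obtain ⟨e, R, helen, hmono, hlet, hmap⟩ :=
    core u hu v halph ℓ k hℓ d (by omega)
  have hψc : ψ.ClosedUnder (n + m) := by
    have h1 := closed_exIter m _ 0 hclosed
    have h2 := closed_allIter n _ (0 + m) h1
    rw [show 0 + m + n = n + m by omega] at h2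
    exact h2
  intro val'
  rw [sat_exIter]
  refine ⟨e, by rw [helen, hdlen], ?_⟩
  rw [sat_allIter]
  intro f hf
  show QF.Sat (catInf (fpow u ℓ) v) (pushVals f (pushVals e val')) ψ
  rw [← QF.sat_map (wpow u hu) (catInf (fpow u ℓ) v) R hmono hlet]
  have hre : pushVals (f.map R) (pushVals d (fun i => R (val' i)))
      = fun i => R (pushVals f (pushVals e val') i) := by
    rw [← hmap, pushVals_map R e val', pushVals_map R f (pushVals e val')]
  rw [← hre]
  have hflen : (f.map R).length = n := by rw [List.length_map, hf]
  have h0 := hallg (f.map R) hflen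
  refine (QF.sat_congr (wpow u hu) _ _ (n + m) ?_ ψ hψc).mp h0
  intro i hi
  by_cases hi' : i < n
  · rw [pushVals_lt _ _ i (by rw [hflen]; exact hi'),
        pushVals_lt _ _ i (by rw [hflen]; exact hi')]
  · rw [pushVals_ge _ _ i (by rw [hflen]; omega),
        pushVals_ge _ _ i (by rw [hflen]; omega), hflen]
    have him : i - n < d.length := by omega
    rw [pushVals_lt _ _ _ him, pushVals_lt _ _ _ him]

end QAH
end

section
/- Let γ: A^+ → S be a semigroup morphism from the free semigroup on a finite alphabet A into a finite semigroup S. Then every ω-word w ∈ A^∞ admits a factorization w = u₀u₁u₂⋯ into infinitely many nonempty finite words such that γ(u_j) = e for all j ≥ 1, where e ∈ S is some idempotent. -/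
namespace QAH

def seg {A : Type} (w : ℕ → A) (a b : ℕ) : List A :=
  (List.range (b - a)).map fun t => w (a + t)

lemma seg_ne_nil {A : Type} (w : ℕ → A) {a b : ℕ} (h : a < b) : seg w a b ≠ [] := by
  simp [seg, List.range_eq_nil, Nat.sub_eq_zero_iff_le]
  omega

lemma seg_append {A : Type} (w : ℕ → A) {a b c : ℕ} (hab : a ≤ b) (hbc : b ≤ c) :
    seg w a b ++ seg w b c = seg w a c := by
  have h : c - a = (b - a) + (c - b) := by omega
  simp only [seg, h, List.range_add, List.map_append, List.map_map]
  congr 1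
  apply List.map_congr_left
  intro t _
  simp [Function.comp]
  congr 1
  omega

lemma pigeon {S : Type} [Finite S] {X : Set ℕ} (hX : X.Infinite) (f : ℕ → S) :
    ∃ s, {n ∈ X | f n = s}.Infinite := by
  by_contra h
  push_neg at h
  have h : ∀ s, {n ∈ X | f n = s}.Finite := h
  have : X ⊆ ⋃ s : S, {n ∈ X | f n = s} := by
    intro n hn; exact Set.mem_iUnion.2 ⟨f n, hn, rfl⟩
  exact hX ((Set.finite_iUnion h).subset this)

/-- **Ramsey factorization.** For a semigroup morphism `γ : A⁺ → S` into a
finite semigroup and any ω-word `w`, there is an idempotent `e ∈ S` and a factorization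
`w = u₀u₁u₂⋯` into nonempty finite words with `γ(u_j) = e` for all `j ≥ 1`. -/
theorem ramsey_factorization (A S : Type) [Semigroup S] [Finite S]
    (γ : List A → S)
    (hγ : ∀ u v : List A, u ≠ [] → v ≠ [] → γ (u ++ v) = γ u * γ v)
    (w : ℕ → A) :
    ∃ (e : S) (c : ℕ → ℕ), e * e = e ∧ StrictMono c ∧ 1 ≤ c 0 ∧
      ∀ j : ℕ, γ (seg w (c j) (c (j+1))) = e := by
  classical
  set col : ℕ → ℕ → S := fun a b => γ (seg w a b) with hcol
  -- step function on infinite sets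
  have step : ∀ X : {X : Set ℕ // X.Infinite},
      ∃ p : ℕ × S × {X : Set ℕ // X.Infinite},
        p.1 ∈ X.1 ∧ p.2.2.1 ⊆ X.1 ∧ ∀ m ∈ p.2.2.1, p.1 < m ∧ col p.1 m = p.2.1 := by
    rintro ⟨X, hX⟩
    obtain ⟨a, ha⟩ := hX.nonempty
    have hX' : {m ∈ X | a < m}.Infinite := by
      have : {m ∈ X | a < m} = X \ (Set.Iic a) := by
        ext m
        simp only [Set.mem_setOf_eq, Set.mem_diff, Set.mem_Iic, not_le]
      rw [this]
      exact hX.diff (Set.finite_Iic a)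
    obtain ⟨s, hs⟩ := pigeon hX' (col a)
    refine ⟨⟨a, s, ⟨{n ∈ {m ∈ X | a < m} | col a n = s}, hs⟩⟩, ha, ?_, ?_⟩
    · intro m hm; exact hm.1.1
    · rintro m ⟨⟨_, h1⟩, h2⟩; exact ⟨h1, h2⟩
  choose F hF1 hF2 hF3 using step
  set X0 : {X : Set ℕ // X.Infinite} := ⟨Set.Ici 1, Set.Ici_infinite 1⟩ with hX0
  set chain : ℕ → {X : Set ℕ // X.Infinite} := fun n => Nat.rec X0 (fun _ X => (F X).2.2) n
    with hchain
  have chain_succ : ∀ n, chain (n+1) = (F (chain n)).2.2 := fun n => rfl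
  set a : ℕ → ℕ := fun n => (F (chain n)).1 with ha
  set s : ℕ → S := fun n => (F (chain n)).2.1 with hs
  have mono : ∀ i j, i ≤ j → (chain j).1 ⊆ (chain i).1 := by
    intro i j hij
    induction j with
    | zero => cases Nat.le_zero.1 hij; exact fun _ h => h
    | succ j ih =>
      rcases Nat.lt_or_ge i (j+1) with h | h
      · exact fun x hx => ih (Nat.lt_succ_iff.1 h) ((chain_succ j ▸ hF2 (chain j)) hx)
      · have : i = j + 1 := le_antisymm hij h
        subst this; exact fun _ h => h
  have key : ∀ i j, i < j → a i < a j ∧ col (a i) (a j) = s i := by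
    intro i j hij
    have haj : a j ∈ (chain (i+1)).1 := mono (i+1) j hij (hF1 (chain j))
    rw [chain_succ] at haj
    exact hF3 (chain i) _ haj
  have amono : StrictMono a := fun i j hij => (key i j hij).1
  have a0 : 1 ≤ a 0 := hF1 X0
  obtain ⟨e, he⟩ := pigeon (Set.infinite_univ (α := ℕ)) s
  have hP : {n | s n = e}.Infinite := by
    have : {n ∈ (Set.univ : Set ℕ) | s n = e} = {n | s n = e} := by ext; simp
    rwa [this] at he
  set c : ℕ → ℕ := fun k => a (Nat.nth (fun n => s n = e) k) with hc
  have hnth : ∀ k, s (Nat.nth (fun n => s n = e) k) = e :=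
    fun k => Nat.nth_mem_of_infinite hP k
  have cmono : StrictMono c := fun i j hij => amono ((Nat.nth_lt_nth hP).2 hij)
  have ccol : ∀ i j, i < j → col (c i) (c j) = e := by
    intro i j hij
    have := (key _ _ ((Nat.nth_lt_nth hP).2 hij)).2
    rw [this, hnth]
  have hidem : e * e = e := by
    have h01 := ccol 0 1 one_pos
    have h12 := ccol 1 2 one_lt_two
    have h02 := ccol 0 2 two_pos
    have hle01 : c 0 < c 1 := cmono one_pos
    have hle12 : c 1 < c 2 := cmono one_lt_two
    calc e * e = col (c 0) (c 1) * col (c 1) (c 2) := by rw [h01, h12]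
      _ = col (c 0) (c 2) := by
          rw [hcol]
          rw [← hγ _ _ (seg_ne_nil w hle01) (seg_ne_nil w hle12),
            seg_append w hle01.le hle12.le]
      _ = e := h02
  refine ⟨e, c, hidem, cmono, le_trans a0 (amono.le_iff_le.2 (Nat.zero_le _)), ?_⟩
  intro j
  exact ccol j (j+1) (Nat.lt_succ_self j)

end QAH
end

section
/- Any subset of S^+ (finite words over a finite alphabet S) that is closed under taking subwords is a regular language. -/
namespace QAH

open List

section DFAs

variable {S : Type} {σ : Type} {ι : Type}

/-- DFA recognizing words containing `w` as a scattered subword. -/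
noncomputable def matcher (w : List S) : DFA S (Fin (w.length + 1)) where
  step i a := by
    classical
    exact if (w.drop i).head? = some a then ⟨min (i + 1) w.length, by omega⟩ else i
  start := ⟨0, by omega⟩
  accept := {i | (i : ℕ) = w.length}

lemma matcher_evalFrom (w : List S) :
    ∀ (x : List S) (i : Fin (w.length + 1)),
      ((matcher w).evalFrom i x ∈ (matcher w).accept ↔ w.drop i <+ x) := by
  intro x
  induction x with
  | nil =>
    intro i
    simp only [DFA.evalFrom_nil, matcher, Set.mem_setOf_eq]
    rw [List.sublist_nil, List.drop_eq_nil_iff]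
    omega
  | cons a x ih =>
    intro i
    have hstep : (matcher w).evalFrom i (a :: x) =
        (matcher w).evalFrom ((matcher w).step i a) x := rfl
    rw [hstep]
    by_cases h : (w.drop i).head? = some a
    · have hne : w.drop i ≠ [] := by
        intro hnil; rw [hnil] at h; simp at h
      have hlt : (i : ℕ) < w.length := by
        by_contra hle
        push_neg at hle
        exact hne (List.drop_eq_nil_iff.mpr hle)
      have hstep' : (matcher w).step i a = ⟨(i : ℕ) + 1, by omega⟩ := by
        simp only [matcher, h, if_pos]
        congr 1
        omega
      rw [hstep', ih]
      obtain ⟨b, t, hbt⟩ : ∃ b t, w.drop i = b :: t := by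
        cases hd : w.drop (i : ℕ) with
        | nil => exact absurd hd hne
        | cons b t => exact ⟨b, t, rfl⟩
      have hb : b = a := by rw [hbt] at h; simpa using h
      have ht : w.drop ((i : ℕ) + 1) = t := by
        rw [← List.tail_drop, hbt]; rfl
      rw [ht, hbt, hb, List.cons_sublist_cons]
    · have hstep' : (matcher w).step i a = i := by
        simp only [matcher, h, if_neg, if_false]
      rw [hstep', ih]
      cases hd : w.drop (i : ℕ) with
      | nil => simp [List.nil_sublist]
      | cons b t =>
        have hba : b ≠ a := by
          intro hba
          apply h
          rw [hd, hba]
          rfl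
        constructor
        · intro hs
          exact hs.cons a
        · intro hs
          cases hs with
          | cons _ h' => exact h'
          | cons_cons _ _ => exact absurd rfl hba

lemma matcher_accepts (w : List S) : (matcher w).accepts = {x | w <+ x} := by
  ext x
  rw [DFA.mem_accepts]
  have := matcher_evalFrom w x ⟨0, by omega⟩
  show _ ↔ w <+ x
  simpa [DFA.eval, matcher] using this

/-- Complement DFA. -/
def complDFA (M : DFA S σ) : DFA S σ := ⟨M.step, M.start, M.acceptᶜ⟩

lemma complDFA_accepts (M : DFA S σ) : (complDFA M).accepts = M.acceptsᶜ := by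
  ext x
  rw [DFA.mem_accepts]
  show _ ↔ ¬ x ∈ M.accepts
  rw [DFA.mem_accepts]
  rfl

/-- DFA recognizing nonempty words. -/
def neDFA : DFA S Bool := ⟨fun _ _ => true, false, {true}⟩

lemma neDFA_accepts : (neDFA : DFA S Bool).accepts = {x | x ≠ []} := by
  have key : ∀ (y : List S), List.foldl (fun (_ : Bool) (_ : S) => true) true y = true := by
    intro y
    induction y with
    | nil => rfl
    | cons b z ihz => simpa using ihz
  ext x
  rw [DFA.mem_accepts]
  cases x with
  | nil =>
    constructor
    · intro hmem
      exact absurd hmem (by simp [neDFA, DFA.eval])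
    · intro hmem
      exact absurd rfl hmem
  | cons a y =>
    have heval : (neDFA : DFA S Bool).eval (a :: y) ∈ (neDFA : DFA S Bool).accept := by
      rw [show (neDFA : DFA S Bool).eval (a :: y) = true from key y]
      rfl
    simp only [heval, true_iff]
    exact fun hc => List.cons_ne_nil a y hc

/-- Product DFA over a family. -/
def prodDFA {τ : ι → Type} (M : ∀ i, DFA S (τ i)) : DFA S (∀ i, τ i) where
  step f a := fun i => (M i).step (f i) a
  start := fun i => (M i).start
  accept := {f | ∀ i, f i ∈ (M i).accept}

lemma prodDFA_evalFrom {τ : ι → Type} (M : ∀ i, DFA S (τ i)) (x : List S)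
    (f : ∀ i, τ i) (i : ι) :
    (prodDFA M).evalFrom f x i = (M i).evalFrom (f i) x := by
  induction x generalizing f with
  | nil => rfl
  | cons a y ih => exact ih fun j => (M j).step (f j) a

lemma prodDFA_eval {τ : ι → Type} (M : ∀ i, DFA S (τ i)) (x : List S) (i : ι) :
    (prodDFA M).eval x i = (M i).eval x :=
  prodDFA_evalFrom M x (prodDFA M).start i

lemma prodDFA_accepts {τ : ι → Type} (M : ∀ i, DFA S (τ i)) :
    (prodDFA M).accepts = {x | ∀ i, x ∈ (M i).accepts} := by
  ext x
  rw [DFA.mem_accepts]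
  constructor
  · intro h i
    rw [DFA.mem_accepts, ← prodDFA_eval M x i]
    exact h i
  · intro h i
    have hi := h i
    rw [DFA.mem_accepts] at hi
    rw [show (prodDFA M).eval x i = (M i).eval x from prodDFA_eval M x i]
    exact hi

end DFAs

section WQO

variable {S : Type} [Finite S]

lemma sublist_pwo : (Set.univ : Set (List S)).PartiallyWellOrderedOn (· <+ ·) := by
  have h : (Set.univ : Set S).PartiallyWellOrderedOn (· = ·) :=
    Set.finite_univ.partiallyWellOrderedOn
  have h2 := h.partiallyWellOrderedOn_sublistForall₂ (r := (· = ·))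
  intro f
  obtain ⟨m, n, hmn, hr⟩ := h2 (fun k => ⟨(f k).1, fun x _ => Set.mem_univ x⟩)
  refine ⟨m, n, hmn, ?_⟩
  change SublistForall₂ (· = ·) (f m).1 (f n).1 at hr
  show (f m).1 <+ (f n).1
  rw [List.sublistForall₂_iff] at hr
  obtain ⟨l, hforall, hsub⟩ := hr
  have hl : f m = l := by rwa [List.forall₂_eq_eq_eq] at hforall
  exact hl ▸ hsub

lemma minimal_finite (U : Set (List S)) :
    {m | m ∈ U ∧ ∀ v ∈ U, v <+ m → v = m}.Finite := by
  by_contra hinf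
  have hinf' : {m | m ∈ U ∧ ∀ v ∈ U, v <+ m → v = m}.Infinite := hinf
  let f := Set.Infinite.natEmbedding _ hinf'
  obtain ⟨m, n, hmn, hsub⟩ := sublist_pwo (S := S) (fun k => ⟨(f k).1, Set.mem_univ _⟩)
  have hm := (f m).2
  have hn := (f n).2
  have heq : (f m).1 = (f n).1 := hn.2 _ hm.1 hsub
  have : f m = f n := Subtype.ext heq
  exact absurd (f.injective this) (Nat.ne_of_lt hmn)

omit [Finite S] in
lemma exists_minimal (U : Set (List S)) (u : List S) (hu : u ∈ U) :
    ∃ m, (m ∈ U ∧ ∀ v ∈ U, v <+ m → v = m) ∧ m <+ u := by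
  have key : ∀ n (u : List S), u.length ≤ n → u ∈ U →
      ∃ m, (m ∈ U ∧ ∀ v ∈ U, v <+ m → v = m) ∧ m <+ u := by
    intro n
    induction n with
    | zero =>
      intro u hlen hu
      refine ⟨u, ⟨hu, fun v hv hvu => hvu.eq_of_length ?_⟩, .refl u⟩
      have := hvu.length_le
      omega
    | succ n ihn =>
      intro u hlen hu
      by_cases h : ∀ v ∈ U, v <+ u → v = u
      · exact ⟨u, ⟨hu, h⟩, .refl u⟩
      · push_neg at h
        obtain ⟨v, hv, hvu, hne⟩ := h
        have hlt : v.length < u.length := by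
          have hle := hvu.length_le
          rcases lt_or_eq_of_le hle with h' | h'
          · exact h'
          · exact absurd (hvu.eq_of_length h') hne
        obtain ⟨m, hm, hmv⟩ := ihn v (by omega) hv
        exact ⟨m, hm, hmv.trans hvu⟩
  exact key u.length u le_rfl hu

end WQO

/-- Any subset of `S⁺` (nonempty finite words over a finite
alphabet `S`) that is closed under taking (scattered) subwords is a regular language. -/
theorem subword_closed_is_regular (S : Type) [Finite S] (L : Language S)
    (hne : ∀ u ∈ L, u ≠ ([] : List S))
    (hclosed : ∀ u v : List S, List.Sublist u v → v ∈ L → u ≠ [] → u ∈ L) :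
    L.IsRegular := by
  classical
  -- the complement (within nonempty words)
  set U : Set (List S) := {u | u ∉ L ∧ u ≠ []} with hU
  have hup : ∀ u ∈ U, ∀ x, u <+ x → x ∈ U := by
    intro u hu x hux
    have hxne : x ≠ [] := by
      intro hx
      rw [hx, List.sublist_nil] at hux
      exact hu.2 hux
    refine ⟨fun hxL => hu.1 (hclosed u x hux hxL hu.2), hxne⟩
  set F : Set (List S) := {m | m ∈ U ∧ ∀ v ∈ U, v <+ m → v = m} with hF
  have hFfin : F.Finite := minimal_finite U
  -- characterization of L
  have hchar : ∀ x, x ∈ L ↔ x ≠ [] ∧ ∀ w ∈ F, ¬ w <+ x := by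
    intro x
    constructor
    · intro hx
      refine ⟨hne x hx, fun w hw hwx => ?_⟩
      exact (hup w hw.1 x hwx).1 hx
    · rintro ⟨hxne, hmin⟩
      by_contra hxL
      have hxU : x ∈ U := ⟨hxL, hxne⟩
      obtain ⟨m, hm, hmx⟩ := exists_minimal U x hxU
      exact hmin m hm hmx
  -- build the DFA
  haveI : Fintype {w : List S // w ∈ F} := hFfin.fintype
  let ι := Option {w : List S // w ∈ F}
  haveI hdec : DecidableEq ι := Classical.decEq _
  haveI hfι : Fintype ι := inferInstanceAs (Fintype (Option {w : List S // w ∈ F}))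
  let τ : ι → Type := fun i => match i with
    | none => Bool
    | some w => Fin (w.1.length + 1)
  let M : ∀ i, DFA S (τ i) := fun i => match i with
    | none => neDFA
    | some w => complDFA (matcher w.1)
  haveI hfτ : ∀ i, Fintype (τ i) := by
    intro i
    cases i with
    | none => exact inferInstanceAs (Fintype Bool)
    | some w => exact inferInstanceAs (Fintype (Fin (w.1.length + 1)))
  haveI hpi : Fintype (∀ i : ι, τ i) := @Pi.instFintype ι τ hdec hfι hfτ
  refine ⟨∀ i : ι, τ i, hpi, prodDFA M, ?_⟩
  rw [prodDFA_accepts]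
  ext x
  show (∀ i, x ∈ (M i).accepts) ↔ x ∈ L
  rw [show (x ∈ L) ↔ _ from hchar x]
  constructor
  · intro h
    constructor
    · have := h none
      rw [show M none = neDFA from rfl, neDFA_accepts] at this
      exact this
    · intro w hw hwx
      have := h (some ⟨w, hw⟩)
      rw [show M (some ⟨w, hw⟩) = complDFA (matcher w) from rfl,
        complDFA_accepts] at this
      change ¬ x ∈ (matcher w).accepts at this
      rw [matcher_accepts] at this
      exact this hwx
  · rintro ⟨hxne, hmin⟩ i
    cases i with
    | none =>
      rw [show M none = neDFA from rfl, neDFA_accepts]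
      exact hxne
    | some w =>
      rw [show M (some w) = complDFA (matcher w.1) from rfl,
        complDFA_accepts]
      change ¬ x ∈ (matcher w.1).accepts
      rw [matcher_accepts]
      exact hmin w.1 w.2

end QAH
end

section
/- Let α: (A^+, A^∞) → (S_+, S_∞) be an alphabet-compatible morphism into a finite ω-semigroup and define the edge relation: (s_+, s_∞) →_B (t_+, t_∞) iff there exist (p₁,p₂), (q₁,q₂) ∈ C₂[α_+] and q ∈ α(A^+) with alph(p₁) = alph(q₁) = alph(q) = B, s_+ p₁ (q₁)^∞ = s_∞ and s_+ p₂ (q₂)^ω q = t_+. Then for every B ⊆ A, the relation →_B is transitive. -/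
namespace QAH

variable {A : Type}

/-! ### Definability and separation -/

/-- `K` is defined (within `A^+`) by a closed `Σᵢ` sentence. -/
def SigmaDefFin (i : ℕ) (K : Set (List A)) : Prop :=
  ∃ φ : Prenex A, φ.Closed ∧ φ.IsSigma i ∧ K = {u | u ≠ [] ∧ SatFin u φ}

/-- `K` is defined by a closed `Σᵢ` sentence (ω-words). -/
def SigmaDefInf (i : ℕ) (K : Set (ℕ → A)) : Prop :=
  ∃ φ : Prenex A, φ.Closed ∧ φ.IsSigma i ∧ K = {w | SatInf w φ}

/-- `K` separates `L₁` from `L₂`. -/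
def Separates {X : Type} (K L₁ L₂ : Set X) : Prop := L₁ ⊆ K ∧ K ∩ L₂ = ∅

/-- Boolean combinations (relative to the universe `U`) of sets satisfying `G`. -/
inductive BoolComb {X : Type} (U : Set X) (G : Set X → Prop) : Set X → Prop
  | base (K : Set X) (h : G K) : BoolComb U G K
  | compl (K : Set X) (h : BoolComb U G K) : BoolComb U G (U \ K)
  | union (K K' : Set X) (h : BoolComb U G K) (h' : BoolComb U G K') : BoolComb U G (K ∪ K')

/-- `K ⊆ A^+` is `BΣᵢ`-definable: a Boolean combination of `Σᵢ`-definable languages. -/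
def BSigmaDefFin (i : ℕ) (K : Set (List A)) : Prop :=
  BoolComb {u : List A | u ≠ []} (SigmaDefFin i) K

def BSigmaDefInf (i : ℕ) (K : Set (ℕ → A)) : Prop :=
  BoolComb Set.univ (SigmaDefInf i) K

/-! ### Semigroups and ω-semigroups -/

/-- `mpow mul s n` is `s^(n+1)`: the `(n+1)`-fold product of `s`. -/
def mpow {S : Type} (mul : S → S → S) (s : S) : ℕ → S
  | 0 => s
  | n+1 => mul (mpow mul s n) s

/-- `segProd mul f a n` is the product `f a * f (a+1) * ⋯ * f (a+n)`. -/
def segProd {S : Type} (mul : S → S → S) (f : ℕ → S) (a : ℕ) : ℕ → S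
  | 0 => f a
  | n+1 => mul (segProd mul f a n) (f (a + n + 1))

/-- An ω-semigroup `(S₊, S_∞)`: a semigroup `S₊`, a mixed product and an infinite
product, satisfying all forms of associativity. -/
structure OmegaSG (Sp Si : Type) where
  mul : Sp → Sp → Sp
  act : Sp → Si → Si
  iprod : (ℕ → Sp) → Si
  mul_assoc : ∀ a b c, mul (mul a b) c = mul a (mul b c)
  act_assoc : ∀ a b x, act (mul a b) x = act a (act b x)
  act_iprod : ∀ f : ℕ → Sp, act (f 0) (iprod fun n => f (n+1)) = iprod f
  iprod_group : ∀ (f : ℕ → Sp) (c : ℕ → ℕ), StrictMono c → c 0 = 0 →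
    iprod (fun n => segProd mul f (c n) (c (n+1) - c n - 1)) = iprod f

/-- `s^∞`: the infinite product `sss⋯`. -/
def OmegaSG.ipow {Sp Si : Type} (M : OmegaSG Sp Si) (s : Sp) : Si := M.iprod fun _ => s

/-- The set `C_{2,2}[α₊]` of `Σ₂`-chains of length 2 for `α₊ : A⁺ → S₊`. -/
def C22Fin {Sp : Type} (αp : List A → Sp) : Set (Sp × Sp) :=
  {p | ∀ k, 1 ≤ k → ∃ x y : List A, x ≠ [] ∧ y ≠ [] ∧
      αp x = p.1 ∧ αp y = p.2 ∧ leFin 2 k x y}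

/-- The set `C_{2,2}[α_∞]` of `Σ₂`-chains of length 2 for `α_∞ : A^∞ → S_∞`. -/
def C22Inf {Si : Type} (αi : (ℕ → A) → Si) : Set (Si × Si) :=
  {p | ∀ k, 1 ≤ k → ∃ w₁ w₂ : ℕ → A,
      αi w₁ = p.1 ∧ αi w₂ = p.2 ∧ leInf 2 k w₁ w₂}

/-- The alphabet of `s ∈ S₊` (well defined when `α` is alphabet compatible). -/
def alphS {Sp : Type} (αp : List A → Sp) (s : Sp) : Set A :=
  {a | ∃ u : List A, u ≠ [] ∧ αp u = s ∧ a ∈ u}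

/-- The alphabet of `t ∈ S_∞`. -/
def alphSi {Si : Type} (αi : (ℕ → A) → Si) (t : Si) : Set A :=
  {a | ∃ w : ℕ → A, αi w = t ∧ ∃ n, w n = a}

/-- Multiplication on `S₊¹ = S₊ ∪ {1}` by an element of `S₊` (`none` is the neutral element). -/
def mul1 {Sp Si : Type} (M : OmegaSG Sp Si) : Option Sp → Sp → Sp
  | none, s => s
  | some t, s => M.mul t s

/-- The `B`-labeled edge relation of the graph `G[α]` associated to `α`:
`(s₊, s_∞) →_B (t₊, t_∞)` iff there are `(p₁,p₂), (q₁,q₂) ∈ C₂[α₊]` and `q ∈ α(A⁺)`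
with `alph p₁ = alph q₁ = alph q = B`, `s₊ p₁ (q₁)^∞ = s_∞` and `s₊ p₂ (q₂)^ω q = t₊`.
Here `e` is such that `x ↦ mpow M.mul x e = x^(e+1) = x^ω` is the idempotent power. -/
def Edge {Sp Si : Type} (M : OmegaSG Sp Si) (αp : List A → Sp) (e : ℕ) (B : Set A)
    (n m : Option Sp × Si) : Prop :=
  ∃ p₁ p₂ q₁ q₂ qq : Sp,
    (p₁, p₂) ∈ C22Fin αp ∧ (q₁, q₂) ∈ C22Fin αp ∧ (∃ u : List A, u ≠ [] ∧ αp u = qq) ∧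
    alphS αp p₁ = B ∧ alphS αp q₁ = B ∧ alphS αp qq = B ∧
    M.act (mul1 M n.1 p₁) (M.ipow q₁) = n.2 ∧
    m.1 = some (M.mul (mul1 M n.1 p₂) (M.mul (mpow M.mul q₂ e) qq))


/-! ### Auxiliary lemmas for the proof -/

lemma alphFin_append (u v : List A) : alphFin (u ++ v) = alphFin u ∪ alphFin v := by
  ext a; simp [alphFin]

lemma alphS_eq_of {Sp : Type} {αp : List A → Sp}
    (hacF : ∀ u v : List A, u ≠ [] → v ≠ [] → αp u = αp v → alphFin u = alphFin v)
    {u : List A} (hu : u ≠ []) {s : Sp} (hs : αp u = s) :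
    alphS αp s = alphFin u := by
  ext a
  constructor
  · rintro ⟨v, hv, hvs, hav⟩
    have h := hacF v u hv hu (hvs.trans hs.symm)
    have : a ∈ alphFin v := hav
    rwa [h] at this
  · intro ha; exact ⟨u, hu, hs, ha⟩

lemma leFin_alph {x y : List A} (hx : x ≠ []) (hy : y ≠ []) (h : leFin 2 1 x y) :
    alphFin x = alphFin y := by
  ext a
  show a ∈ x ↔ a ∈ y
  constructor
  · intro ha
    have hsat : SatFin y (.ex (.qf (.letter a 0))) := by
      refine h _ ?_ ?_ ?_ ?_
      · show QF.ClosedUnder 1 (QF.letter a 0); exact Nat.zero_lt_one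
      · show max (0:ℕ) 1 ≤ 2; simp
      · show (1:ℕ) ≤ 1; exact le_rfl
      · intro val
        obtain ⟨d, hd⟩ := List.mem_iff_get.mp ha
        exact ⟨d, hd⟩
    obtain ⟨d, hd⟩ := hsat (fun _ => ⟨0, List.length_pos_iff.mpr hy⟩)
    exact hd ▸ List.get_mem y d
  · intro ha
    by_contra hax
    have hsat : SatFin y (.all (.qf (.not (.letter a 0)))) := by
      refine h _ ?_ ?_ ?_ ?_
      · show QF.ClosedUnder 1 (QF.letter a 0); exact Nat.zero_lt_one
      · show max (0:ℕ) 1 + 1 ≤ 2; simp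
      · show (1:ℕ) ≤ 1; exact le_rfl
      · intro val d heq
        exact hax (heq ▸ List.get_mem x _)
    obtain ⟨d, hd⟩ := List.mem_iff_get.mp ha
    exact hsat (fun _ => ⟨0, List.length_pos_iff.mpr hy⟩) d hd

lemma mpow_word {Sp Si : Type} (M : OmegaSG Sp Si) {αp : List A → Sp}
    (hp : ∀ u v : List A, u ≠ [] → v ≠ [] → αp (u ++ v) = M.mul (αp u) (αp v))
    {u : List A} (hu : u ≠ []) :
    ∀ n, ∃ w : List A, w ≠ [] ∧ αp w = mpow M.mul (αp u) n ∧ alphFin w = alphFin u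
  | 0 => ⟨u, hu, rfl, rfl⟩
  | n+1 => by
    obtain ⟨w, hw, hαw, hal⟩ := mpow_word M hp hu n
    refine ⟨w ++ u, fun h => hw (List.append_eq_nil_iff.mp h).1, ?_, ?_⟩
    · rw [hp w u hw hu, hαw]; rfl
    · rw [alphFin_append, hal, Set.union_self]

/-- For an alphabet-compatible morphism `α` into a finite
ω-semigroup and every `B ⊆ A`, the `B`-labeled edge relation of the graph `G[α]`
is transitive. (Here `x^ω = mpow M.mul x e` is the idempotent power.) -/
theorem edge_transitive (A Sp Si : Type) (M : OmegaSG Sp Si)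
    (hSp : Finite Sp) (hSi : Finite Si)
    (αp : List A → Sp) (αi : (ℕ → A) → Si)
    (hp : ∀ u v : List A, u ≠ [] → v ≠ [] → αp (u ++ v) = M.mul (αp u) (αp v))
    (hmix : ∀ (u : List A), u ≠ [] → ∀ w : ℕ → A, αi (catInf u w) = M.act (αp u) (αi w))
    (hpow : ∀ (u : List A) (hu : u ≠ []), αi (wpow u hu) = M.ipow (αp u))
    (hacF : ∀ u v : List A, u ≠ [] → v ≠ [] → αp u = αp v → alphFin u = alphFin v)
    (hacI : ∀ w w' : ℕ → A, αi w = αi w' → alphInf w = alphInf w')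
    (e : ℕ) (he : ∀ s : Sp, M.mul (mpow M.mul s e) (mpow M.mul s e) = mpow M.mul s e) :
    ∀ B : Set A, Transitive (Edge M αp e B) := by
  intro B n m l h1 h2
  obtain ⟨p₁, p₂, q₁, q₂, qq, hP, hQ, ⟨uq, huq, hαuq⟩, hap, haq, haqq, hact, hm⟩ := h1
  obtain ⟨p₁', p₂', q₁', q₂', qq', hP', hQ', ⟨uq', huq', hαuq'⟩, hap', haq', haqq', hact', hl⟩ := h2
  obtain ⟨x', y', hx', hy', hαx', hαy', hle'⟩ := hP' 1 le_rfl
  obtain ⟨x'', y'', hx'', hy'', hαx'', hαy'', hle''⟩ := hQ' 1 le_rfl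
  have haly' : alphFin y' = B := by
    rw [← leFin_alph hx' hy' hle', ← alphS_eq_of hacF hx' hαx', hap']
  have haly'' : alphFin y'' = B := by
    rw [← leFin_alph hx'' hy'' hle'', ← alphS_eq_of hacF hx'' hαx'', haq']
  have haluq : alphFin uq = B := by rw [← alphS_eq_of hacF huq hαuq, haqq]
  have haluq' : alphFin uq' = B := by rw [← alphS_eq_of hacF huq' hαuq', haqq']
  obtain ⟨w, hw, hαw, halw⟩ := mpow_word M hp hy'' e
  have hwuq : w ++ uq' ≠ [] := fun h => hw (List.append_eq_nil_iff.mp h).1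
  have hywuq : y' ++ (w ++ uq') ≠ [] := fun h => hy' (List.append_eq_nil_iff.mp h).1
  have h1' : αp (w ++ uq') = M.mul (mpow M.mul q₂' e) qq' := by
    rw [hp w uq' hw huq', hαw, hαy'', hαuq']
  have h2' : αp (y' ++ (w ++ uq')) = M.mul p₂' (M.mul (mpow M.mul q₂' e) qq') := by
    rw [hp y' _ hy' hwuq, h1', hαy']
  have hαU : αp (uq ++ (y' ++ (w ++ uq'))) =
      M.mul qq (M.mul p₂' (M.mul (mpow M.mul q₂' e) qq')) := by
    rw [hp uq _ huq hywuq, h2', hαuq]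
  have hU : uq ++ (y' ++ (w ++ uq')) ≠ [] :=
    fun h => huq (List.append_eq_nil_iff.mp h).1
  have halU : alphFin (uq ++ (y' ++ (w ++ uq'))) = B := by
    rw [alphFin_append, alphFin_append, alphFin_append, haluq, haly', halw, haly'',
      haluq', Set.union_self, Set.union_self, Set.union_self]
  refine ⟨p₁, p₂, q₁, q₂, M.mul qq (M.mul p₂' (M.mul (mpow M.mul q₂' e) qq')),
    hP, hQ, ⟨_, hU, hαU⟩, hap, haq, ?_, hact, ?_⟩
  · rw [alphS_eq_of hacF hU hαU, halU]
  · rw [hl, hm]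
    simp only [mul1, M.mul_assoc]


end QAH
end
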